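/- If an increasing sequence (a_n) of reals with a_n → ∞ satisfies inf_n (a_{n+1} − a_n) ≥ 1, then the set E = {y ∈ ℝ : the sequence (y·a_n) is not dense modulo 1} has Lebesgue measure zero. -/

import Mathlib

open MeasureTheory Filter Topology

/-- The sequence `x` is dense modulo 1: its fractional parts are dense in `[0,1)`. -/
def DenseMod1 (x : ℕ → ℝ) : Prop :=
  ∀ t ∈ Set.Ico (0 : ℝ) 1, ∀ ε > 0, ∃ n, |Int.fract (x n) - t| < ε

/-- Measure estimate for a single scale `A`. -/
lemma aux_est {c d A x r : ℝ} (hc : 0 ≤ c) (hcd : c < d) (hd : d ≤ 1)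
    (hA : 0 < A) (hr : 0 < r) {E : Set ℝ}
    (hE : ∀ y ∈ E, Int.fract (y * A) ∉ Set.Ioo c d) :
    volume (E ∩ Metric.closedBall x r) + ENNReal.ofReal ((2*r*A - 2) * ((d - c)/A))
      ≤ ENNReal.ofReal (2*r) := by
  set p : ℤ := ⌈A*(x-r) - c⌉ with hp
  set q : ℤ := ⌊A*(x+r) - d⌋ with hq
  set K : Finset ℤ := Finset.Icc p q with hK
  set J : ℤ → Set ℝ := fun k => Set.Ioo (((k:ℝ)+c)/A) (((k:ℝ)+d)/A) with hJ
  have hJsub : ∀ k ∈ K, J k ⊆ Set.Icc (x-r) (x+r) := by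
    intro k hk y hy
    obtain ⟨hk1, hk2⟩ := Finset.mem_Icc.mp hk
    have h1 : A*(x-r) - c ≤ (k:ℝ) := le_trans (Int.le_ceil _) (by exact_mod_cast hk1)
    have h2 : (k:ℝ) ≤ A*(x+r) - d := le_trans (by exact_mod_cast hk2) (Int.floor_le _)
    have hl : x - r ≤ ((k:ℝ)+c)/A := by rw [le_div_iff₀ hA]; linarith
    have hu : ((k:ℝ)+d)/A ≤ x + r := by rw [div_le_iff₀ hA]; linarith
    exact ⟨le_of_lt (lt_of_le_of_lt hl hy.1), le_of_lt (lt_of_lt_of_le hy.2 hu)⟩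
  have hmul : ∀ (k : ℤ) (y : ℝ), y ∈ J k → (k:ℝ) + c < y * A ∧ y * A < (k:ℝ) + d := by
    intro k y hy
    constructor
    · have := hy.1; rw [div_lt_iff₀ hA] at this; linarith
    · have := hy.2; rw [lt_div_iff₀ hA] at this; linarith
  have hJE : ∀ k, Disjoint (J k) E := by
    intro k
    rw [Set.disjoint_left]
    intro y hy hyE
    obtain ⟨h1, h2⟩ := hmul k y hy
    have hfl : ⌊y * A⌋ = k := by
      rw [Int.floor_eq_iff]
      constructor
      · linarith
      · push_cast; linarith
    have hfr : Int.fract (y * A) = y * A - k := by rw [Int.fract, hfl]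
    exact hE y hyE (by rw [hfr]; exact ⟨by linarith, by linarith⟩)
  have hdisj : (↑K : Set ℤ).Pairwise (Function.onFun Disjoint J) := by
    have key : ∀ m m' : ℤ, m < m' → Disjoint (J m) (J m') := by
      intro m m' hlt
      rw [Set.disjoint_left]
      intro y hy hy'
      have hmm : (m:ℝ) + 1 ≤ (m':ℝ) := by exact_mod_cast hlt
      obtain ⟨_, h1⟩ := hmul m y hy
      obtain ⟨h2, _⟩ := hmul m' y hy'
      linarith
    intro k _ k' _ hne
    rcases hne.lt_or_gt with h | h
    · exact key k k' h
    · exact (key k' k h).symm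
  have hvol : volume (⋃ k ∈ K, J k) = K.card * ENNReal.ofReal ((d-c)/A) := by
    rw [measure_biUnion_finset hdisj (fun k _ => measurableSet_Ioo)]
    have hc1 : ∀ k ∈ K, volume (J k) = ENNReal.ofReal ((d-c)/A) := by
      intro k _
      rw [hJ]
      simp only [Real.volume_Ioo]
      congr 1
      field_simp
      ring
    rw [Finset.sum_congr rfl hc1, Finset.sum_const, nsmul_eq_mul]
  have hcard : 2*r*A - 2 ≤ (K.card : ℝ) := by
    have h1 : (p:ℝ) < A*(x-r) - c + 1 := Int.ceil_lt_add_one _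
    have h2 : A*(x+r) - d - 1 < (q:ℝ) := Int.sub_one_lt_floor _
    have h3 : (2*r*A - 2 : ℝ) ≤ ((q + 1 - p : ℤ) : ℝ) := by push_cast; nlinarith
    calc (2*r*A - 2 : ℝ) ≤ ((q + 1 - p : ℤ) : ℝ) := h3
      _ ≤ (((q + 1 - p).toNat : ℤ) : ℝ) := by exact_mod_cast Int.self_le_toNat _
      _ = (K.card : ℝ) := by rw [hK, Int.card_Icc]; norm_cast
  have hlow : ENNReal.ofReal ((2*r*A - 2) * ((d-c)/A)) ≤ volume (⋃ k ∈ K, J k) := by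
    rw [hvol]
    have hnn : (0:ℝ) ≤ (d-c)/A := div_nonneg (by linarith) hA.le
    calc ENNReal.ofReal ((2*r*A - 2) * ((d-c)/A))
        ≤ ENNReal.ofReal ((K.card : ℝ) * ((d-c)/A)) :=
          ENNReal.ofReal_le_ofReal (mul_le_mul_of_nonneg_right hcard hnn)
      _ = (K.card : ENNReal) * ENNReal.ofReal ((d-c)/A) := by
          rw [ENNReal.ofReal_mul (by positivity), ENNReal.ofReal_natCast]
  have hdisj2 : Disjoint (E ∩ Metric.closedBall x r) (⋃ k ∈ K, J k) := by
    rw [Set.disjoint_right]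
    intro y hy hyE
    simp only [Set.mem_iUnion] at hy
    obtain ⟨k, _, hyk⟩ := hy
    exact Set.disjoint_left.mp (hJE k) hyk hyE.1
  have hsub : (E ∩ Metric.closedBall x r) ∪ (⋃ k ∈ K, J k) ⊆ Set.Icc (x-r) (x+r) := by
    intro y hy
    rcases hy with hy | hy
    · have := hy.2; rwa [Real.closedBall_eq_Icc] at this
    · simp only [Set.mem_iUnion] at hy
      obtain ⟨k, hk, hyk⟩ := hy
      exact hJsub k hk hyk
  calc volume (E ∩ Metric.closedBall x r) + ENNReal.ofReal ((2*r*A - 2) * ((d-c)/A))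
      ≤ volume (E ∩ Metric.closedBall x r) + volume (⋃ k ∈ K, J k) := by
        exact add_le_add le_rfl hlow
    _ = volume ((E ∩ Metric.closedBall x r) ∪ (⋃ k ∈ K, J k)) :=
        (measure_union hdisj2 (K.measurableSet_biUnion (fun k _ => measurableSet_Ioo))).symm
    _ ≤ volume (Set.Icc (x-r) (x+r)) := measure_mono hsub
    _ = ENNReal.ofReal (2*r) := by rw [Real.volume_Icc]; congr 1; ring

/-- The set where fractional parts of `y * a n` avoid a fixed interval is null. -/
lemma key_null (a : ℕ → ℝ) (hlim : Tendsto a atTop atTop) {c d : ℝ}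
    (hc : 0 ≤ c) (hcd : c < d) (hd : d ≤ 1) :
    volume {y : ℝ | ∀ n, Int.fract (y * a n) ∉ Set.Ioo c d} = 0 := by
  set E := {y : ℝ | ∀ n, Int.fract (y * a n) ∉ Set.Ioo c d} with hEdef
  set L : ℝ := d - c with hL
  have hL0 : 0 < L := sub_pos.mpr hcd
  have hL1 : L ≤ 1 := by rw [hL]; linarith
  have stepA : ∀ x : ℝ, ∀ r : ℝ, 0 < r →
      volume (E ∩ Metric.closedBall x r) ≤ ENNReal.ofReal (2*r*(1-L)) := by
    intro x r hr
    have htend0 : Tendsto (fun n => 2 * (L / a n)) atTop (𝓝 0) := by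
      have h0 : Tendsto (fun n => L / a n) atTop (𝓝 0) :=
        Tendsto.div_atTop tendsto_const_nhds hlim
      simpa using h0.const_mul 2
    have hf : Tendsto (fun n => ENNReal.ofReal (2*r*(1-L) + 2*(L / a n))) atTop
        (𝓝 (ENNReal.ofReal (2*r*(1-L)))) := by
      apply ENNReal.tendsto_ofReal
      simpa using tendsto_const_nhds.add htend0
    refine ge_of_tendsto hf ?_
    filter_upwards [hlim.eventually_ge_atTop (max 1 (2/r))] with n hn
    have hA : 0 < a n := lt_of_lt_of_le (by norm_num) (le_trans (le_max_left _ _) hn)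
    have h2r : 2/r ≤ a n := le_trans (le_max_right _ _) hn
    have hA2 : 2 ≤ r * a n := by
      rw [div_le_iff₀ hr] at h2r; linarith [mul_comm (a n) r]
    have haux := aux_est hc hcd hd hA hr (x := x) (E := E) (fun y hy => hy n)
    have hs : (0:ℝ) ≤ (2*r*(a n) - 2) * (L/(a n)) := by
      apply mul_nonneg
      · linarith
      · positivity
    have h1 : volume (E ∩ Metric.closedBall x r)
        ≤ ENNReal.ofReal (2*r) - ENNReal.ofReal ((2*r*(a n) - 2) * (L/(a n))) :=
      ENNReal.le_sub_of_add_le_right ENNReal.ofReal_ne_top haux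
    rw [← ENNReal.ofReal_sub _ hs] at h1
    refine h1.trans (ENNReal.ofReal_le_ofReal (le_of_eq ?_))
    have hA' : a n ≠ 0 := ne_of_gt hA
    field_simp
    ring
  have stepB : ∀ x : ℝ, ∀ r : ℝ, 0 < r →
      volume (E ∩ Metric.closedBall x r) / volume (Metric.closedBall x r)
        ≤ ENNReal.ofReal (1-L) := by
    intro x r hr
    rw [Real.volume_closedBall]
    apply ENNReal.div_le_of_le_mul
    rw [← ENNReal.ofReal_mul (by linarith)]
    refine (stepA x r hr).trans (le_of_eq ?_)
    congr 1; ring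
  have stepC : ∀ x : ℝ,
      ¬ Tendsto (fun rr => volume (E ∩ Metric.closedBall x rr) / volume (Metric.closedBall x rr))
        (𝓝[>] 0) (𝓝 1) := by
    intro x hT
    have h1 : ENNReal.ofReal (1-L) < 1 := ENNReal.ofReal_lt_one.mpr (by linarith)
    have h2 : ∀ᶠ rr in 𝓝[>] (0:ℝ),
        ENNReal.ofReal (1-L) <
          volume (E ∩ Metric.closedBall x rr) / volume (Metric.closedBall x rr) :=
      hT (Ioi_mem_nhds h1)
    obtain ⟨rr, hgt, hmem⟩ := (h2.and eventually_mem_nhdsWithin).exists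
    exact absurd (stepB x rr hmem) (not_le.mpr hgt)
  have hae := Besicovitch.ae_tendsto_measure_inter_div volume E
  have hfalse : ∀ᵐ x ∂(volume.restrict E), False := by
    filter_upwards [hae] with x hx using stepC x hx
  rw [eventually_false_iff_eq_bot] at hfalse
  exact ae_restrict_eq_bot.mp hfalse

theorem stmt_8 (a : ℕ → ℝ) (hmono : StrictMono a) (hlim : Tendsto a atTop atTop)
    (hgap : ∀ n, 1 ≤ a (n + 1) - a n) :
    volume {y : ℝ | ¬ DenseMod1 (fun n => y * a n)} = 0 := by
  have hsub : {y : ℝ | ¬ DenseMod1 (fun n => y * a n)} ⊆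
      ⋃ q : ℚ × ℚ, {y : ℝ | (0:ℝ) ≤ (q.1:ℝ) ∧ (q.1:ℝ) < (q.2:ℝ) ∧ (q.2:ℝ) ≤ 1 ∧
        ∀ n, Int.fract (y * a n) ∉ Set.Ioo (q.1:ℝ) (q.2:ℝ)} := by
    intro y hy
    simp only [Set.mem_setOf_eq, DenseMod1] at hy
    push_neg at hy
    obtain ⟨t, ht, ε, hε, hfar⟩ := hy
    obtain ⟨ht0, ht1⟩ := ht
    have hlohi : max 0 (t - ε) < min 1 (t + ε) := by
      rcases max_cases 0 (t - ε) with ⟨h, _⟩ | ⟨h, _⟩ <;>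
      rcases min_cases 1 (t + ε) with ⟨h', _⟩ | ⟨h', _⟩ <;> rw [h, h'] <;> linarith
    obtain ⟨c, hc1, hc2⟩ := exists_rat_btwn hlohi
    obtain ⟨d, hd1, hd2⟩ := exists_rat_btwn hc2
    simp only [Set.mem_iUnion, Set.mem_setOf_eq]
    refine ⟨(c, d), ?_, ?_, ?_, ?_⟩
    · exact le_of_lt (lt_of_le_of_lt (le_max_left _ _) hc1)
    · exact_mod_cast hd1
    · exact le_of_lt (lt_of_lt_of_le hd2 (min_le_left _ _))
    · intro n hmem
      have hcε : t - ε ≤ (c:ℝ) := le_of_lt (lt_of_le_of_lt (le_max_right _ _) hc1)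
      have hdε : (d:ℝ) ≤ t + ε := le_of_lt (lt_of_lt_of_le hd2 (min_le_right _ _))
      have hf := hfar n
      obtain ⟨h1, h2⟩ := hmem
      have : |Int.fract (y * a n) - t| < ε := abs_lt.mpr ⟨by linarith, by linarith⟩
      linarith
  refine measure_mono_null hsub (measure_iUnion_null fun q => ?_)
  by_cases h1 : (0:ℝ) ≤ (q.1:ℝ) ∧ (q.1:ℝ) < (q.2:ℝ) ∧ (q.2:ℝ) ≤ 1
  · obtain ⟨ha, hb, hc'⟩ := h1
    exact measure_mono_null (fun y hy => hy.2.2.2) (key_null a hlim ha hb hc')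
  · have : {y : ℝ | (0:ℝ) ≤ (q.1:ℝ) ∧ (q.1:ℝ) < (q.2:ℝ) ∧ (q.2:ℝ) ≤ 1 ∧
        ∀ n, Int.fract (y * a n) ∉ Set.Ioo (q.1:ℝ) (q.2:ℝ)} = ∅ :=
      Set.eq_empty_iff_forall_notMem.mpr (fun y hy => h1 ⟨hy.1, hy.2.1, hy.2.2.1⟩)
    rw [this, measure_empty]
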